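/- Let T, E be positive trace-preserving linear maps on M_d(ℂ) where T has a unique stationary state and ‖Tⁿ − T^∞‖_{1→1} ≤ K·μⁿ for all n with K ≥ 1, 0 ≤ μ < 1. Set n̂ = ⌈log(1/K)/log(μ)⌉. Then for density matrices ρ₀, σ₀ and all n > n̂: ‖Tⁿ(ρ₀) − Eⁿ(σ₀)‖₁ ≤ K·μⁿ‖ρ₀ − σ₀‖₁ + (n̂ + K·(μ^{n̂} − μⁿ)/(1−μ))·‖E − T‖_{1→1}. -/

import Mathlib

open Matrix Filter
open scoped ComplexOrder

/-- Trace norm (Schatten 1-norm) of a complex matrix: `tr √(XᴴX)`. -/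
noncomputable def traceNorm {d : ℕ} (X : Matrix (Fin d) (Fin d) ℂ) : ℝ :=
  ((Matrix.posSemidef_conjTranspose_mul_self X).isHermitian.eigenvectorUnitary.1 *
    diagonal (((↑) : ℝ → ℂ) ∘ (√·) ∘ (Matrix.posSemidef_conjTranspose_mul_self X).isHermitian.eigenvalues) *
    (star (Matrix.posSemidef_conjTranspose_mul_self X).isHermitian.eigenvectorUnitary :
      Matrix (Fin d) (Fin d) ℂ)).trace.re

/-- Linear endomorphisms of `M_d(ℂ)` (superoperators). -/
abbrev MatEnd (d : ℕ) := Module.End ℂ (Matrix (Fin d) (Fin d) ℂ)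

/-- Trace-preserving map. -/
def IsTP {d : ℕ} (T : MatEnd d) : Prop := ∀ X, (T X).trace = X.trace

/-- Positive map: maps PSD matrices to PSD matrices. -/
def IsPos {d : ℕ} (T : MatEnd d) : Prop := ∀ X, X.PosSemidef → (T X).PosSemidef

/-- Hermiticity-preserving map. -/
def IsHP {d : ℕ} (T : MatEnd d) : Prop := ∀ X, (T X)ᴴ = T Xᴴ

/-- Induced 1→1 norm: `sup_{X ≠ 0} ‖T X‖₁ / ‖X‖₁`. -/
noncomputable def norm1to1 {d : ℕ} (T : MatEnd d) : ℝ :=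
  sSup {r | ∃ X, X ≠ 0 ∧ r = traceNorm (T X) / traceNorm X}

/-- Trace-norm contraction coefficient: sup over nonzero Hermitian traceless `σ`. -/
noncomputable def tau {d : ℕ} (T : MatEnd d) : ℝ :=
  sSup {r | ∃ σ : Matrix (Fin d) (Fin d) ℂ,
    σ.IsHermitian ∧ σ.trace = 0 ∧ σ ≠ 0 ∧ r = traceNorm (T σ) / traceNorm σ}

/-- Density matrix: positive semidefinite with unit trace. -/
def IsDensity {d : ℕ} (ρ : Matrix (Fin d) (Fin d) ℂ) : Prop := ρ.PosSemidef ∧ ρ.trace = 1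

/-- `Tinf` is the Cesàro-mean fixed point projection of `T`. -/
def IsCesaroProj {d : ℕ} (T Tinf : MatEnd d) : Prop :=
  ∀ X, Tendsto (fun n : ℕ => (n : ℂ)⁻¹ • ∑ k ∈ Finset.range n, (T ^ (k + 1)) X)
    atTop (nhds (Tinf X))
section PSDsqrt
open scoped MatrixOrder

noncomputable def Matrix.PosSemidef.sqrt {d : ℕ} {A : Matrix (Fin d) (Fin d) ℂ} (_ : A.PosSemidef) :
    Matrix (Fin d) (Fin d) ℂ := CFC.sqrt A

lemma Matrix.PosSemidef.posSemidef_sqrt {d : ℕ} {A : Matrix (Fin d) (Fin d) ℂ}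
    (hA : A.PosSemidef) : hA.sqrt.PosSemidef := (CFC.sqrt_nonneg A).posSemidef

lemma Matrix.PosSemidef.sqrt_mul_self {d : ℕ} {A : Matrix (Fin d) (Fin d) ℂ}
    (hA : A.PosSemidef) : hA.sqrt * hA.sqrt = A := CFC.sqrt_mul_sqrt_self A hA.nonneg

lemma Matrix.PosSemidef.eq_sqrt_of_sq_eq {d : ℕ} {A : Matrix (Fin d) (Fin d) ℂ}
    (hA : A.PosSemidef) {B : Matrix (Fin d) (Fin d) ℂ} (hB : B.PosSemidef) (h : A ^ 2 = B) :
    A = hB.sqrt := (CFC.sqrt_unique (by rw [← sq]; exact h) hA.nonneg).symm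

lemma traceNorm_eq_sqrt {d : ℕ} (X : Matrix (Fin d) (Fin d) ℂ) :
    traceNorm X = ((Matrix.posSemidef_conjTranspose_mul_self X).sqrt).trace.re := by
  have hX := Matrix.posSemidef_conjTranspose_mul_self X
  rw [traceNorm, Matrix.PosSemidef.sqrt, CFC.sqrt_eq_cfc, cfc_nnreal_eq_real _ (Xᴴ * X),
    hX.1.cfc_eq, Matrix.IsHermitian.cfc, Unitary.conjStarAlgAut_apply]
  congr 5
  funext i
  simp only [Function.comp_apply, Real.coe_sqrt, Real.coe_toNNReal']
  exact congrArg _ (congrArg Real.sqrt (max_eq_left (hX.eigenvalues_nonneg i)).symm)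

end PSDsqrt

variable {d : ℕ}
namespace TNaux

lemma sqrt_congr {A B : Matrix (Fin d) (Fin d) ℂ} (hA : A.PosSemidef) (hB : B.PosSemidef)
    (h : A = B) : hA.sqrt = hB.sqrt := by subst h; rfl

lemma diag_nonneg {M : Matrix (Fin d) (Fin d) ℂ} (hM : M.PosSemidef) (i : Fin d) :
    0 ≤ M i i := by
  exact hM.diag_nonneg

lemma trace_re_nonneg {M : Matrix (Fin d) (Fin d) ℂ} (hM : M.PosSemidef) :
    0 ≤ M.trace.re := by
  rw [Matrix.trace]
  simp only [Complex.re_sum]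
  exact Finset.sum_nonneg fun i _ => (Complex.nonneg_iff.mp (diag_nonneg hM i)).1

lemma traceNorm_nonneg (X : Matrix (Fin d) (Fin d) ℂ) : 0 ≤ traceNorm X := by
  rw [traceNorm_eq_sqrt]; exact trace_re_nonneg (Matrix.posSemidef_conjTranspose_mul_self X).posSemidef_sqrt

lemma traceNorm_psd {M : Matrix (Fin d) (Fin d) ℂ} (hM : M.PosSemidef) :
    traceNorm M = M.trace.re := by
  have h : M = (Matrix.posSemidef_conjTranspose_mul_self M).sqrt :=
    hM.eq_sqrt_of_sq_eq _ (by rw [pow_two, hM.1.eq])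
  rw [traceNorm_eq_sqrt, ← h]

lemma trace_re (M : Matrix (Fin d) (Fin d) ℂ) : M.trace.re = ∑ i, (M i i).re := by
  rw [Matrix.trace]
  simp [Complex.re_sum, Matrix.diag]

lemma trace_conj_left (U : Matrix.unitaryGroup (Fin d) ℂ) (M : Matrix (Fin d) (Fin d) ℂ) :
    ((U : Matrix (Fin d) (Fin d) ℂ) * M * star (U : Matrix (Fin d) (Fin d) ℂ)).trace = M.trace := by
  rw [Matrix.trace_mul_cycle, Unitary.coe_star_mul_self, one_mul]

lemma trace_conj_right (U : Matrix.unitaryGroup (Fin d) ℂ) (M : Matrix (Fin d) (Fin d) ℂ) :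
    (star (U : Matrix (Fin d) (Fin d) ℂ) * M * (U : Matrix (Fin d) (Fin d) ℂ)).trace = M.trace := by
  have h : (U : Matrix (Fin d) (Fin d) ℂ) * star (U : Matrix (Fin d) (Fin d) ℂ) = 1 :=
    (Unitary.mem_iff.mp U.2).2
  rw [Matrix.trace_mul_cycle, h, one_mul]

lemma conj_diag_psd (U : Matrix.unitaryGroup (Fin d) ℂ) {f : Fin d → ℝ} (hf : ∀ i, 0 ≤ f i) :
    ((U : Matrix (Fin d) (Fin d) ℂ) * Matrix.diagonal (fun i => ((f i : ℝ) : ℂ)) *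
      star (U : Matrix (Fin d) (Fin d) ℂ)).PosSemidef := by
  have hd : (Matrix.diagonal (fun i => ((f i : ℝ) : ℂ))).PosSemidef := by
    refine Matrix.posSemidef_diagonal_iff.mpr fun i => ?_
    rw [Complex.nonneg_iff]
    exact ⟨by simpa using hf i, by simp⟩
  have := hd.mul_mul_conjTranspose_same (U : Matrix (Fin d) (Fin d) ℂ)
  simpa [Matrix.star_eq_conjTranspose] using this

lemma conj_sq (U : Matrix.unitaryGroup (Fin d) ℂ) (v : Fin d → ℂ) :
    ((U : Matrix (Fin d) (Fin d) ℂ) * Matrix.diagonal v * star (U : Matrix (Fin d) (Fin d) ℂ)) ^ 2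
      = (U : Matrix (Fin d) (Fin d) ℂ) * Matrix.diagonal (fun i => v i * v i) *
        star (U : Matrix (Fin d) (Fin d) ℂ) := by
  rw [pow_two]
  have h : star (U : Matrix (Fin d) (Fin d) ℂ) * (U : Matrix (Fin d) (Fin d) ℂ) = 1 :=
    Unitary.coe_star_mul_self U
  calc (U : Matrix (Fin d) (Fin d) ℂ) * Matrix.diagonal v * star (U : Matrix (Fin d) (Fin d) ℂ) *
        ((U : Matrix (Fin d) (Fin d) ℂ) * Matrix.diagonal v * star (U : Matrix (Fin d) (Fin d) ℂ))
      = (U : Matrix (Fin d) (Fin d) ℂ) * (Matrix.diagonal v *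
          ((star (U : Matrix (Fin d) (Fin d) ℂ) * (U : Matrix (Fin d) (Fin d) ℂ)) *
            (Matrix.diagonal v * star (U : Matrix (Fin d) (Fin d) ℂ)))) := by
        simp only [mul_assoc]
    _ = _ := by
        rw [h, one_mul, ← mul_assoc (Matrix.diagonal v), Matrix.diagonal_mul_diagonal, ← mul_assoc]

/-- traceNorm of a Hermitian matrix is the sum of absolute values of eigenvalues. -/
lemma traceNorm_herm {A : Matrix (Fin d) (Fin d) ℂ} (hA : A.IsHermitian) :
    traceNorm A = ∑ i, |hA.eigenvalues i| := by
  set U := hA.eigenvectorUnitary with hU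
  set S : Matrix (Fin d) (Fin d) ℂ :=
    (U : Matrix (Fin d) (Fin d) ℂ) * Matrix.diagonal (fun i => ((|hA.eigenvalues i| : ℝ) : ℂ)) *
      star (U : Matrix (Fin d) (Fin d) ℂ) with hS
  have hSpsd : S.PosSemidef := conj_diag_psd U fun i => abs_nonneg _
  have hA2 : A * A = (U : Matrix (Fin d) (Fin d) ℂ) *
      Matrix.diagonal (fun i => ((hA.eigenvalues i : ℝ) : ℂ) * ((hA.eigenvalues i : ℝ) : ℂ)) *
      star (U : Matrix (Fin d) (Fin d) ℂ) := by
    have h1 := conj_sq U (RCLike.ofReal ∘ hA.eigenvalues)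
    rw [pow_two] at h1
    conv_lhs => rw [hA.spectral_theorem, Unitary.conjStarAlgAut_apply]
    rw [← hU, h1]
    rfl
  have hsq : S ^ 2 = Aᴴ * A := by
    have hfun : (fun i => ((|hA.eigenvalues i| : ℝ) : ℂ) * ((|hA.eigenvalues i| : ℝ) : ℂ))
        = fun i => ((hA.eigenvalues i : ℝ) : ℂ) * ((hA.eigenvalues i : ℝ) : ℂ) := by
      funext i
      rw [← Complex.ofReal_mul, ← Complex.ofReal_mul, abs_mul_abs_self]
    rw [hS, conj_sq, hA.eq, hA2, hfun]
  have heq : S = (Matrix.posSemidef_conjTranspose_mul_self A).sqrt :=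
    hSpsd.eq_sqrt_of_sq_eq _ hsq
  rw [traceNorm_eq_sqrt, ← heq, hS, trace_conj_left, Matrix.trace_diagonal]
  simp [Complex.re_sum]

lemma herm_decomp {A : Matrix (Fin d) (Fin d) ℂ} (hA : A.IsHermitian) :
    ∃ P N : Matrix (Fin d) (Fin d) ℂ, P.PosSemidef ∧ N.PosSemidef ∧ A = P - N ∧
      traceNorm A = P.trace.re + N.trace.re := by
  set U := hA.eigenvectorUnitary with hU
  set lam := hA.eigenvalues with hlam
  refine ⟨(U : Matrix (Fin d) (Fin d) ℂ) * Matrix.diagonal (fun i => ((max (lam i) 0 : ℝ) : ℂ)) *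
      star (U : Matrix (Fin d) (Fin d) ℂ),
    (U : Matrix (Fin d) (Fin d) ℂ) * Matrix.diagonal (fun i => ((max (-lam i) 0 : ℝ) : ℂ)) *
      star (U : Matrix (Fin d) (Fin d) ℂ),
    conj_diag_psd U fun i => le_max_right _ _, conj_diag_psd U fun i => le_max_right _ _, ?_, ?_⟩
  · rw [← Matrix.sub_mul, ← Matrix.mul_sub, Matrix.diagonal_sub]
    simp only [Pi.sub_def, ← Complex.ofReal_sub, max_zero_sub_max_neg_zero_eq_self]
    conv_lhs => rw [hA.spectral_theorem, Unitary.conjStarAlgAut_apply]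
    rfl
  · rw [traceNorm_herm hA, trace_conj_left, trace_conj_left, Matrix.trace_diagonal,
      Matrix.trace_diagonal]
    simp only [Complex.re_sum, Complex.ofReal_re, ← Finset.sum_add_distrib]
    exact Finset.sum_congr rfl fun i _ => (max_zero_add_max_neg_zero_eq_abs_self _).symm

/-- Key upper bound: any PSD decomposition dominates the trace norm. -/
lemma traceNorm_sub_le {P N : Matrix (Fin d) (Fin d) ℂ} (hP : P.PosSemidef) (hN : N.PosSemidef) :
    traceNorm (P - N) ≤ P.trace.re + N.trace.re := by
  have hA : (P - N).IsHermitian := hP.1.sub hN.1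
  set U := hA.eigenvectorUnitary with hU
  have hdiag : star (U : Matrix (Fin d) (Fin d) ℂ) * (P - N) * (U : Matrix (Fin d) (Fin d) ℂ)
      = Matrix.diagonal (RCLike.ofReal ∘ hA.eigenvalues) := by
    conv_lhs => rw [hA.spectral_theorem, Unitary.conjStarAlgAut_apply]
    rw [← hU]
    simp only [mul_assoc, Unitary.coe_star_mul_self, mul_one]
    simp only [← mul_assoc, Unitary.coe_star_mul_self, one_mul]
  have hP' : (star (U : Matrix (Fin d) (Fin d) ℂ) * P * (U : Matrix (Fin d) (Fin d) ℂ)).PosSemidef := by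
    simpa [Matrix.star_eq_conjTranspose] using
      hP.conjTranspose_mul_mul_same (U : Matrix (Fin d) (Fin d) ℂ)
  have hN' : (star (U : Matrix (Fin d) (Fin d) ℂ) * N * (U : Matrix (Fin d) (Fin d) ℂ)).PosSemidef := by
    simpa [Matrix.star_eq_conjTranspose] using
      hN.conjTranspose_mul_mul_same (U : Matrix (Fin d) (Fin d) ℂ)
  rw [traceNorm_herm hA]
  have hsplit : ∀ i, |hA.eigenvalues i| ≤
      ((star (U : Matrix (Fin d) (Fin d) ℂ) * P * (U : Matrix (Fin d) (Fin d) ℂ)) i i).re +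
      ((star (U : Matrix (Fin d) (Fin d) ℂ) * N * (U : Matrix (Fin d) (Fin d) ℂ)) i i).re := by
    intro i
    have h1 : (star (U : Matrix (Fin d) (Fin d) ℂ) * (P - N) * (U : Matrix (Fin d) (Fin d) ℂ)) i i
        = ((hA.eigenvalues i : ℝ) : ℂ) := by
      rw [hdiag]
      simp [Matrix.diagonal_apply_eq]
    have h2 : (star (U : Matrix (Fin d) (Fin d) ℂ) * (P - N) * (U : Matrix (Fin d) (Fin d) ℂ))
        = star (U : Matrix (Fin d) (Fin d) ℂ) * P * (U : Matrix (Fin d) (Fin d) ℂ)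
          - star (U : Matrix (Fin d) (Fin d) ℂ) * N * (U : Matrix (Fin d) (Fin d) ℂ) := by
      rw [Matrix.mul_sub, Matrix.sub_mul]
    have h3 := congrArg Complex.re (h2 ▸ h1)
    simp only [Matrix.sub_apply, Complex.sub_re, Complex.ofReal_re] at h3
    rw [← h3]
    have hp := (Complex.nonneg_iff.mp (diag_nonneg hP' i)).1
    have hn := (Complex.nonneg_iff.mp (diag_nonneg hN' i)).1
    calc |_ - _| ≤ |_| + |_| := abs_sub _ _
      _ = _ + _ := by rw [abs_of_nonneg hp, abs_of_nonneg hn]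
  calc ∑ i, |hA.eigenvalues i| ≤ ∑ i, (((star (U : Matrix (Fin d) (Fin d) ℂ) * P *
        (U : Matrix (Fin d) (Fin d) ℂ)) i i).re +
        ((star (U : Matrix (Fin d) (Fin d) ℂ) * N * (U : Matrix (Fin d) (Fin d) ℂ)) i i).re) :=
      Finset.sum_le_sum fun i _ => hsplit i
    _ = P.trace.re + N.trace.re := by
      rw [Finset.sum_add_distrib]
      congr 1
      · rw [← trace_re, trace_conj_right]
      · rw [← trace_re, trace_conj_right]

lemma traceNorm_zero : traceNorm (0 : Matrix (Fin d) (Fin d) ℂ) = 0 := by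
  rw [traceNorm_psd Matrix.PosSemidef.zero]
  simp

lemma traceNorm_neg (X : Matrix (Fin d) (Fin d) ℂ) : traceNorm (-X) = traceNorm X := by
  rw [traceNorm_eq_sqrt, traceNorm_eq_sqrt]
  rw [sqrt_congr (Matrix.posSemidef_conjTranspose_mul_self (-X))
    (Matrix.posSemidef_conjTranspose_mul_self X) (by simp)]

lemma traceNorm_triangle {A B : Matrix (Fin d) (Fin d) ℂ}
    (hA : A.IsHermitian) (hB : B.IsHermitian) :
    traceNorm (A + B) ≤ traceNorm A + traceNorm B := by
  obtain ⟨P₁, N₁, hP₁, hN₁, hd₁, he₁⟩ := herm_decomp hA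
  obtain ⟨P₂, N₂, hP₂, hN₂, hd₂, he₂⟩ := herm_decomp hB
  have h : A + B = (P₁ + P₂) - (N₁ + N₂) := by rw [hd₁, hd₂]; abel
  rw [h, he₁, he₂]
  refine (traceNorm_sub_le (hP₁.add hP₂) (hN₁.add hN₂)).trans_eq ?_
  rw [Matrix.trace_add, Matrix.trace_add, Complex.add_re, Complex.add_re]
  ring

lemma isHermitian_sum {ι : Type*} (s : Finset ι) (f : ι → Matrix (Fin d) (Fin d) ℂ)
    (hf : ∀ i ∈ s, (f i).IsHermitian) : (∑ i ∈ s, f i).IsHermitian := by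
  rw [Matrix.IsHermitian, Matrix.conjTranspose_sum]
  exact Finset.sum_congr rfl hf

lemma traceNorm_sum_le {ι : Type*} (s : Finset ι) (f : ι → Matrix (Fin d) (Fin d) ℂ)
    (hf : ∀ i ∈ s, (f i).IsHermitian) :
    traceNorm (∑ i ∈ s, f i) ≤ ∑ i ∈ s, traceNorm (f i) := by
  induction s using Finset.cons_induction with
  | empty => simp [traceNorm_zero]
  | cons a s ha ih =>
    rw [Finset.sum_cons, Finset.sum_cons]
    have h1 := traceNorm_triangle (hf a (Finset.mem_cons_self a s))
      (isHermitian_sum s f fun i hi => hf i (Finset.mem_cons_of_mem hi))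
    exact h1.trans (add_le_add_right (ih fun i hi => hf i (Finset.mem_cons_of_mem hi)) _)

lemma isHermitian_map {T : MatEnd d} (hPos : IsPos T) {A : Matrix (Fin d) (Fin d) ℂ}
    (hA : A.IsHermitian) : (T A).IsHermitian := by
  obtain ⟨P, N, hP, hN, hd, -⟩ := herm_decomp hA
  rw [hd, map_sub]
  exact ((hPos P hP).1).sub ((hPos N hN).1)

lemma traceNorm_map_le {T : MatEnd d} (hTP : IsTP T) (hPos : IsPos T)
    {A : Matrix (Fin d) (Fin d) ℂ} (hA : A.IsHermitian) :
    traceNorm (T A) ≤ traceNorm A := by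
  obtain ⟨P, N, hP, hN, hd, he⟩ := herm_decomp hA
  have h : T A = T P - T N := by rw [hd, map_sub]
  rw [h, he]
  have h2 := traceNorm_sub_le (hPos P hP) (hPos N hN)
  rwa [hTP P, hTP N] at h2

lemma isPos_pow {T : MatEnd d} (hPos : IsPos T) (m : ℕ) : IsPos (T ^ m) := by
  induction m with
  | zero => intro X hX; simpa [Module.End.one_apply] using hX
  | succ m ih =>
    intro X hX
    rw [pow_succ', Module.End.mul_apply]
    exact hPos _ (ih X hX)

lemma isTP_pow {T : MatEnd d} (hTP : IsTP T) (m : ℕ) : IsTP (T ^ m) := by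
  induction m with
  | zero => intro X; simp [Module.End.one_apply]
  | succ m ih =>
    intro X
    rw [pow_succ', Module.End.mul_apply, hTP, ih]

lemma traceNorm_pow_le {T : MatEnd d} (hTP : IsTP T) (hPos : IsPos T) (m : ℕ)
    {A : Matrix (Fin d) (Fin d) ℂ} (hA : A.IsHermitian) :
    traceNorm ((T ^ m) A) ≤ traceNorm A := by
  induction m with
  | zero => simp [Module.End.one_apply]
  | succ m ih =>
    rw [pow_succ', Module.End.mul_apply]
    exact (traceNorm_map_le hTP hPos (isHermitian_map (isPos_pow hPos m) hA)).trans ih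

lemma trace_re_eq_sum_eigenvalues {A : Matrix (Fin d) (Fin d) ℂ} (hA : A.IsHermitian) :
    A.trace.re = ∑ i, hA.eigenvalues i := by
  conv_lhs => rw [hA.spectral_theorem, Unitary.conjStarAlgAut_apply]
  rw [trace_conj_left, Matrix.trace_diagonal]
  simp [Complex.re_sum]

lemma trace_sq_re {A : Matrix (Fin d) (Fin d) ℂ} (hA : A.IsHermitian) :
    (A * A).trace.re = ∑ i, (hA.eigenvalues i) ^ 2 := by
  have h1 := conj_sq hA.eigenvectorUnitary (RCLike.ofReal ∘ hA.eigenvalues)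
  rw [pow_two] at h1
  conv_lhs => rw [hA.spectral_theorem, Unitary.conjStarAlgAut_apply]
  rw [h1, trace_conj_left, Matrix.trace_diagonal]
  simp [Complex.re_sum, pow_two, Function.comp]

lemma trace_conjTranspose_mul_self_re (X : Matrix (Fin d) (Fin d) ℂ) :
    (Xᴴ * X).trace.re = ∑ j, ∑ k, Complex.normSq (X k j) := by
  rw [trace_re]
  simp only [Matrix.mul_apply, Matrix.conjTranspose_apply, Complex.re_sum]
  refine Finset.sum_congr rfl fun j _ => Finset.sum_congr rfl fun k _ => ?_
  simp [Complex.normSq_apply, Complex.mul_re, mul_comm]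

/-- sum of singular values facts -/
lemma tn_eq_sum_sv (X : Matrix (Fin d) (Fin d) ℂ) :
    ∃ s : Fin d → ℝ, (∀ i, 0 ≤ s i) ∧ traceNorm X = ∑ i, s i ∧
      (∑ j, ∑ k, Complex.normSq (X k j)) = ∑ i, (s i) ^ 2 := by
  set hXX := Matrix.posSemidef_conjTranspose_mul_self X
  refine ⟨hXX.posSemidef_sqrt.1.eigenvalues, hXX.posSemidef_sqrt.eigenvalues_nonneg, ?_, ?_⟩
  · rw [traceNorm_eq_sqrt]; exact trace_re_eq_sum_eigenvalues hXX.posSemidef_sqrt.1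
  · have h := trace_sq_re hXX.posSemidef_sqrt.1
    rw [hXX.sqrt_mul_self, trace_conjTranspose_mul_self_re] at h
    exact h

lemma entry_le_tn (X : Matrix (Fin d) (Fin d) ℂ) (i j : Fin d) :
    ‖X i j‖ ≤ traceNorm X := by
  obtain ⟨s, hs0, hs1, hs2⟩ := tn_eq_sum_sv X
  have h1 : Complex.normSq (X i j) ≤ ∑ j', ∑ k, Complex.normSq (X k j') := by
    calc Complex.normSq (X i j) ≤ ∑ k, Complex.normSq (X k j) :=
          Finset.single_le_sum (f := fun k => Complex.normSq (X k j))
            (fun k _ => Complex.normSq_nonneg _) (Finset.mem_univ i)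
      _ ≤ _ := Finset.single_le_sum (f := fun j' => ∑ k, Complex.normSq (X k j'))
            (fun j' _ => Finset.sum_nonneg fun k _ => Complex.normSq_nonneg _)
            (Finset.mem_univ j)
  have h2 : ∑ i', (s i') ^ 2 ≤ (∑ i', s i') ^ 2 := by
    rw [pow_two, Finset.sum_mul]
    refine Finset.sum_le_sum fun i' _ => ?_
    rw [pow_two]
    exact mul_le_mul_of_nonneg_left
      (Finset.single_le_sum (fun k _ => hs0 k) (Finset.mem_univ i')) (hs0 i')
  have h3 : Complex.normSq (X i j) ≤ (traceNorm X) ^ 2 := by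
    rw [hs1]; exact h1.trans (hs2 ▸ h2)
  have h4 : (‖X i j‖) ^ 2 ≤ (traceNorm X) ^ 2 := by
    rwa [Complex.sq_norm]
  calc ‖X i j‖ = Real.sqrt ((‖X i j‖) ^ 2) :=
        (Real.sqrt_sq (norm_nonneg _)).symm
    _ ≤ Real.sqrt ((traceNorm X) ^ 2) := Real.sqrt_le_sqrt h4
    _ = traceNorm X := Real.sqrt_sq (traceNorm_nonneg X)

lemma tn_pos {X : Matrix (Fin d) (Fin d) ℂ} (hX : X ≠ 0) : 0 < traceNorm X := by
  obtain ⟨i, j, hij⟩ : ∃ i j, X i j ≠ 0 := by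
    by_contra h
    push_neg at h
    exact hX (by ext i j; exact h i j)
  exact lt_of_lt_of_le (norm_pos_iff.mpr hij) (entry_le_tn X i j)

section opnorm

attribute [local instance] Matrix.normedAddCommGroup Matrix.normedSpace

lemma tn_le_norm (X : Matrix (Fin d) (Fin d) ℂ) :
    traceNorm X ≤ (d : ℝ) ^ 2 * ‖X‖ := by
  obtain ⟨s, hs0, hs1, hs2⟩ := tn_eq_sum_sv X
  have hnorm : 0 ≤ ‖X‖ := norm_nonneg X
  have hentry : ∀ k j, Complex.normSq (X k j) ≤ ‖X‖ ^ 2 := by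
    intro k j
    rw [← Complex.sq_norm]
    refine pow_le_pow_left₀ (norm_nonneg _) ?_ 2
    exact X.norm_entry_le_entrywise_sup_norm (i := k) (j := j)
  have hsum : ∑ j, ∑ k, Complex.normSq (X k j) ≤ (d : ℝ) ^ 2 * ‖X‖ ^ 2 := by
    calc ∑ j, ∑ k, Complex.normSq (X k j) ≤ ∑ j : Fin d, ∑ k : Fin d, ‖X‖ ^ 2 :=
        Finset.sum_le_sum fun j _ => Finset.sum_le_sum fun k _ => hentry k j
      _ = (d : ℝ) ^ 2 * ‖X‖ ^ 2 := by
        simp [Finset.sum_const, pow_two]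
        ring
  have hsi : ∀ i, s i ≤ (d : ℝ) * ‖X‖ := by
    intro i
    have h1 : (s i) ^ 2 ≤ ((d : ℝ) * ‖X‖) ^ 2 := by
      calc (s i) ^ 2 ≤ ∑ i', (s i') ^ 2 :=
            Finset.single_le_sum (f := fun i' => (s i') ^ 2)
              (fun i' _ => sq_nonneg _) (Finset.mem_univ i)
        _ = ∑ j, ∑ k, Complex.normSq (X k j) := hs2.symm
        _ ≤ (d : ℝ) ^ 2 * ‖X‖ ^ 2 := hsum
        _ = ((d : ℝ) * ‖X‖) ^ 2 := by ring
    have h2 : 0 ≤ (d : ℝ) * ‖X‖ := mul_nonneg (Nat.cast_nonneg d) hnorm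
    calc s i = Real.sqrt ((s i) ^ 2) := (Real.sqrt_sq (hs0 i)).symm
      _ ≤ Real.sqrt (((d : ℝ) * ‖X‖) ^ 2) := Real.sqrt_le_sqrt h1
      _ = (d : ℝ) * ‖X‖ := Real.sqrt_sq h2
  calc traceNorm X = ∑ i, s i := hs1
    _ ≤ ∑ i : Fin d, (d : ℝ) * ‖X‖ := Finset.sum_le_sum fun i _ => hsi i
    _ = (d : ℝ) ^ 2 * ‖X‖ := by
      simp [Finset.sum_const, pow_two]
      ring

lemma norm_le_tn (X : Matrix (Fin d) (Fin d) ℂ) : ‖X‖ ≤ traceNorm X := by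
  rw [Matrix.norm_le_iff (traceNorm_nonneg X)]
  intro i j
  exact entry_le_tn X i j

lemma norm1to1_bddAbove (L : MatEnd d) :
    BddAbove {r | ∃ X : Matrix (Fin d) (Fin d) ℂ, X ≠ 0 ∧ r = traceNorm (L X) / traceNorm X} := by
  refine ⟨(d : ℝ) ^ 2 * ContinuousLinearMap.opNorm (LinearMap.toContinuousLinearMap L), ?_⟩
  rintro r ⟨X, hX, rfl⟩
  have htn := tn_pos hX
  rw [div_le_iff₀ htn]
  calc traceNorm (L X) ≤ (d : ℝ) ^ 2 * ‖L X‖ := tn_le_norm _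
    _ = (d : ℝ) ^ 2 * ‖LinearMap.toContinuousLinearMap L X‖ := rfl
    _ ≤ (d : ℝ) ^ 2 * (ContinuousLinearMap.opNorm (LinearMap.toContinuousLinearMap L) * ‖X‖) := by
        have := (LinearMap.toContinuousLinearMap L).le_opNorm X
        exact mul_le_mul_of_nonneg_left this (by positivity)
    _ ≤ (d : ℝ) ^ 2 * (ContinuousLinearMap.opNorm (LinearMap.toContinuousLinearMap L) * traceNorm X) := by
        have := norm_le_tn X
        have h0 : (0:ℝ) ≤ ContinuousLinearMap.opNorm (LinearMap.toContinuousLinearMap L) :=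
          ContinuousLinearMap.opNorm_nonneg _
        gcongr
    _ = (d : ℝ) ^ 2 * ContinuousLinearMap.opNorm (LinearMap.toContinuousLinearMap L) * traceNorm X := by ring

end opnorm

lemma tn_apply_le (L : MatEnd d) (X : Matrix (Fin d) (Fin d) ℂ) :
    traceNorm (L X) ≤ norm1to1 L * traceNorm X := by
  by_cases hX : X = 0
  · simp [hX, traceNorm_zero]
  · have hmem : traceNorm (L X) / traceNorm X ∈
        {r | ∃ X : Matrix (Fin d) (Fin d) ℂ, X ≠ 0 ∧ r = traceNorm (L X) / traceNorm X} :=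
      ⟨X, hX, rfl⟩
    have h := le_csSup (norm1to1_bddAbove L) hmem
    have htn := tn_pos hX
    calc traceNorm (L X) = traceNorm (L X) / traceNorm X * traceNorm X := by
          field_simp
      _ ≤ norm1to1 L * traceNorm X := mul_le_mul_of_nonneg_right h htn.le

lemma norm1to1_nonneg (L : MatEnd d) {X₀ : Matrix (Fin d) (Fin d) ℂ} (hX₀ : X₀ ≠ 0) :
    0 ≤ norm1to1 L := by
  have hmem : traceNorm (L X₀) / traceNorm X₀ ∈
      {r | ∃ X : Matrix (Fin d) (Fin d) ℂ, X ≠ 0 ∧ r = traceNorm (L X) / traceNorm X} :=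
    ⟨X₀, hX₀, rfl⟩
  exact le_trans (div_nonneg (traceNorm_nonneg _) (traceNorm_nonneg _))
    (le_csSup (norm1to1_bddAbove L) hmem)

end TNaux

/-- discrete-time perturbation bound for `n > n̂`. -/
theorem discrete_time_perturbation {d : ℕ} (T E Tinf : MatEnd d)
    (hTTP : IsTP T) (hTPos : IsPos T) (hETP : IsTP E) (hEPos : IsPos E)
    (ρ : Matrix (Fin d) (Fin d) ℂ) (hρ : IsDensity ρ) (hfix : T ρ = ρ)
    (huniq : ∀ ρ' : Matrix (Fin d) (Fin d) ℂ, IsDensity ρ' → T ρ' = ρ' → ρ' = ρ)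
    (hTinf : ∀ X, Tinf X = X.trace • ρ)
    (K μ : ℝ) (hK : 1 ≤ K) (hμ0 : 0 ≤ μ) (hμ1 : μ < 1)
    (hconv : ∀ n : ℕ, norm1to1 (T ^ n - Tinf) ≤ K * μ ^ n)
    (ρ₀ σ₀ : Matrix (Fin d) (Fin d) ℂ) (hρ₀ : IsDensity ρ₀) (hσ₀ : IsDensity σ₀) :
    ∀ n : ℕ, ⌈Real.log (1 / K) / Real.log μ⌉₊ < n →
      traceNorm ((T ^ n) ρ₀ - (E ^ n) σ₀) ≤
        K * μ ^ n * traceNorm (ρ₀ - σ₀) +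
          ((⌈Real.log (1 / K) / Real.log μ⌉₊ : ℝ) +
            K * (μ ^ (⌈Real.log (1 / K) / Real.log μ⌉₊ : ℕ) - μ ^ n) / (1 - μ)) *
            norm1to1 (E - T) := by
  intro n hn
  open TNaux in
  set nh := ⌈Real.log (1 / K) / Real.log μ⌉₊ with hnh
  set ET := norm1to1 (E - T) with hET
  -- basic facts
  have hρ₀ne : ρ₀ ≠ 0 := by
    intro h
    have := hρ₀.2
    rw [h] at this
    simpa using this
  have hETnn : 0 ≤ ET := TNaux.norm1to1_nonneg _ hρ₀ne
  have densE : ∀ k : ℕ, ((E ^ k) σ₀).PosSemidef ∧ ((E ^ k) σ₀).trace = 1 := fun k =>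
    ⟨TNaux.isPos_pow hEPos k σ₀ hσ₀.1, (TNaux.isTP_pow hETP k σ₀).trans hσ₀.2⟩
  have tnY : ∀ k : ℕ, traceNorm ((E ^ k) σ₀) = 1 := by
    intro k
    rw [TNaux.traceNorm_psd (densE k).1, (densE k).2]
    simp
  -- telescoping identity
  have hterm : ∀ k ∈ Finset.range n,
      (T ^ (n - k)) ((E ^ k) σ₀) - (T ^ (n - (k + 1))) ((E ^ (k + 1)) σ₀)
        = (T ^ (n - 1 - k)) ((T - E) ((E ^ k) σ₀)) := by
    intro k hk
    have hk' := Finset.mem_range.mp hk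
    have e1 : n - k = (n - 1 - k) + 1 := by omega
    have e2 : n - (k + 1) = n - 1 - k := by omega
    rw [e1, e2, pow_succ T (n - 1 - k), Module.End.mul_apply, pow_succ' E k,
      Module.End.mul_apply, LinearMap.sub_apply, map_sub]
  have htel : (T ^ n) σ₀ - (E ^ n) σ₀
      = ∑ k ∈ Finset.range n, (T ^ (n - 1 - k)) ((T - E) ((E ^ k) σ₀)) := by
    have h0 := Finset.sum_range_sub' (fun k => (T ^ (n - k)) ((E ^ k) σ₀)) n
    rw [Finset.sum_congr rfl hterm] at h0
    rw [h0]
    simp [Module.End.one_apply]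
  have key : (T ^ n) ρ₀ - (E ^ n) σ₀
      = (T ^ n) (ρ₀ - σ₀) + ∑ k ∈ Finset.range n, (T ^ (n - 1 - k)) ((T - E) ((E ^ k) σ₀)) := by
    rw [← htel, map_sub]
    abel
  -- Hermitian facts
  have hHerm0 : (ρ₀ - σ₀).IsHermitian := hρ₀.1.1.sub hσ₀.1.1
  have hZherm : ∀ k : ℕ, ((T - E) ((E ^ k) σ₀)).IsHermitian := by
    intro k
    rw [LinearMap.sub_apply]
    exact (hTPos _ (densE k).1).1.sub (hEPos _ (densE k).1).1
  have hgherm : ∀ k ∈ Finset.range n, ((T ^ (n - 1 - k)) ((T - E) ((E ^ k) σ₀))).IsHermitian :=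
    fun k _ => TNaux.isHermitian_map (TNaux.isPos_pow hTPos _) (hZherm k)
  -- triangle
  have tri : traceNorm ((T ^ n) ρ₀ - (E ^ n) σ₀) ≤
      traceNorm ((T ^ n) (ρ₀ - σ₀)) +
        ∑ k ∈ Finset.range n, traceNorm ((T ^ (n - 1 - k)) ((T - E) ((E ^ k) σ₀))) := by
    rw [key]
    exact (TNaux.traceNorm_triangle (TNaux.isHermitian_map (TNaux.isPos_pow hTPos n) hHerm0)
      (TNaux.isHermitian_sum _ _ hgherm)).trans
      (add_le_add_right (TNaux.traceNorm_sum_le _ _ hgherm) _)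
  -- trace-zero trick
  have hTinfzero : ∀ (m : ℕ) (Z : Matrix (Fin d) (Fin d) ℂ), Z.trace = 0 →
      (T ^ m) Z = (T ^ m - Tinf) Z := by
    intro m Z hZ
    rw [LinearMap.sub_apply, hTinf, hZ, zero_smul, sub_zero]
  -- head bound
  have head : traceNorm ((T ^ n) (ρ₀ - σ₀)) ≤ K * μ ^ n * traceNorm (ρ₀ - σ₀) := by
    have htr0 : (ρ₀ - σ₀).trace = 0 := by
      rw [Matrix.trace_sub, hρ₀.2, hσ₀.2, sub_self]
    rw [hTinfzero n _ htr0]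
    exact (TNaux.tn_apply_le _ _).trans
      (mul_le_mul_of_nonneg_right (hconv n) (TNaux.traceNorm_nonneg _))
  -- term bounds
  have hterm_le : ∀ k ∈ Finset.range n,
      traceNorm ((T ^ (n - 1 - k)) ((T - E) ((E ^ k) σ₀))) ≤
        (if n - 1 - k < nh then 1 else K * μ ^ (n - 1 - k)) * ET := by
    intro k hk
    set Y := (E ^ k) σ₀ with hY
    set Z := (T - E) Y with hZdef
    have htrZ : Z.trace = 0 := by
      rw [hZdef, LinearMap.sub_apply, Matrix.trace_sub, hTTP, hETP, sub_self]
    have hZtn : traceNorm Z ≤ ET := by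
      have hneg : (E - T) Y = -Z := by
        rw [hZdef, LinearMap.sub_apply, LinearMap.sub_apply]
        abel
      have := TNaux.tn_apply_le (E - T) Y
      rw [hneg, TNaux.traceNorm_neg, tnY k, mul_one] at this
      exact this
    split_ifs with h
    · calc traceNorm ((T ^ (n - 1 - k)) Z) ≤ traceNorm Z :=
          TNaux.traceNorm_pow_le hTTP hTPos _ (hZherm k)
        _ ≤ ET := hZtn
        _ = 1 * ET := (one_mul ET).symm
    · rw [hTinfzero (n - 1 - k) _ htrZ]
      calc traceNorm ((T ^ (n - 1 - k) - Tinf) Z)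
          ≤ norm1to1 (T ^ (n - 1 - k) - Tinf) * traceNorm Z := TNaux.tn_apply_le _ _
        _ ≤ (K * μ ^ (n - 1 - k)) * ET := by
            apply mul_le_mul (hconv _) hZtn (TNaux.traceNorm_nonneg _)
            positivity
  -- sum of coefficients
  have hsum : ∑ k ∈ Finset.range n, (if n - 1 - k < nh then (1:ℝ) else K * μ ^ (n - 1 - k))
      = (nh : ℝ) + K * (μ ^ (nh : ℕ) - μ ^ n) / (1 - μ) := by
    rw [Finset.sum_range_reflect (fun m => if m < nh then (1:ℝ) else K * μ ^ m) n]
    have hnhn : nh ≤ n := hn.le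
    rw [Finset.range_eq_Ico, ← Finset.sum_Ico_consecutive _ (Nat.zero_le nh) hnhn]
    have h1 : ∑ m ∈ Finset.Ico 0 nh, (if m < nh then (1:ℝ) else K * μ ^ m) = (nh : ℝ) := by
      rw [Finset.sum_congr rfl (fun m hm => if_pos (Finset.mem_Ico.mp hm).2)]
      simp
    have h2 : ∑ m ∈ Finset.Ico nh n, (if m < nh then (1:ℝ) else K * μ ^ m)
        = K * (μ ^ (nh : ℕ) - μ ^ n) / (1 - μ) := by
      rw [Finset.sum_congr rfl (fun m hm => if_neg (by
        have := (Finset.mem_Ico.mp hm).1; omega))]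
      rw [← Finset.mul_sum, geom_sum_Ico hμ1.ne hnhn]
      rw [show (μ ^ n - μ ^ nh) / (μ - 1) = (μ ^ nh - μ ^ n) / (1 - μ) by
        rw [← neg_sub (μ ^ nh), ← neg_sub (1:ℝ) μ, neg_div_neg_eq], mul_div_assoc]
    rw [h1, h2]
  -- combine
  calc traceNorm ((T ^ n) ρ₀ - (E ^ n) σ₀)
      ≤ traceNorm ((T ^ n) (ρ₀ - σ₀)) +
        ∑ k ∈ Finset.range n, traceNorm ((T ^ (n - 1 - k)) ((T - E) ((E ^ k) σ₀))) := tri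
    _ ≤ K * μ ^ n * traceNorm (ρ₀ - σ₀) +
        ∑ k ∈ Finset.range n, (if n - 1 - k < nh then (1:ℝ) else K * μ ^ (n - 1 - k)) * ET :=
        add_le_add head (Finset.sum_le_sum hterm_le)
    _ = K * μ ^ n * traceNorm (ρ₀ - σ₀) +
        ((nh : ℝ) + K * (μ ^ (nh : ℕ) - μ ^ n) / (1 - μ)) * ET := by
        rw [← Finset.sum_mul, hsum]
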